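/- Let (M,γ) be a 2-dimensional Riemannian manifold, ρ a smooth 1-form with dual vector field ρ♯, and ∇ the metric connection ∇_X Y = ∇*_X Y − ρ(Y)X + γ(X,Y)ρ♯, where ∇* is the Levi-Civita connection. If the curvature tensor of ∇ vanishes identically, then the Gauss curvature κ* of γ satisfies κ* = −div*(ρ♯), where div* is the divergence with respect to γ. -/

import Mathlib

/-!  An abstract model of the calculus of smooth vector fields on a Riemannian manifold:
`F` plays the role of the algebra of smooth functions, `V` the `F`-module of smooth
vector fields, `γ` the Riemannian metric, `D X f` the directional derivative `X f`,
and `bracket` the Lie bracket of vector fields. -/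

variable {F V : Type*} [CommRing F] [Algebra ℝ F] [AddCommGroup V] [Module F V]

/-- `nabla` is a linear connection (with directional derivative operator `D`). -/
def IsConnection (D : V → F → F) (nabla : V → V → V) : Prop :=
  (∀ X Y Z : V, nabla (X + Y) Z = nabla X Z + nabla Y Z) ∧
  (∀ (f : F) (X Y : V), nabla (f • X) Y = f • nabla X Y) ∧
  (∀ X Y Z : V, nabla X (Y + Z) = nabla X Y + nabla X Z) ∧
  (∀ (X : V) (f : F) (Y : V), nabla X (f • Y) = D X f • Y + f • nabla X Y)

/-- `nabla` is metrical with respect to the metric `γ`, i.e. `∇γ = 0`. -/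
def IsMetrical (γ : V →ₗ[F] V →ₗ[F] F) (D : V → F → F) (nabla : V → V → V) : Prop :=
  ∀ X Y Z : V, D X (γ Y Z) = γ (nabla X Y) Z + γ Y (nabla X Z)

/-- The torsion tensor `T(X,Y) = ∇_X Y − ∇_Y X − [X,Y]` of a connection. -/
def torsionT (bracket : V → V → V) (nabla : V → V → V) (X Y : V) : V :=
  nabla X Y - nabla Y X - bracket X Y

/-- The curvature tensor `R(X,Y)Z = ∇_X ∇_Y Z − ∇_Y ∇_X Z − ∇_{[X,Y]} Z`. -/
def curvatureR (bracket : V → V → V) (nabla : V → V → V) (X Y Z : V) : V :=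
  nabla X (nabla Y Z) - nabla Y (nabla X Z) - nabla (bracket X Y) Z

/-- On a 2-dimensional Riemannian manifold (modelled by a global
`γ`-orthonormal frame `E1, E2` spanning the module of vector fields), if the
semi-symmetric metric connection `∇_X Y = ∇*_X Y − ρ(Y)X + γ(X,Y)ρ♯` is flat, then the
Gauss curvature `κ* = γ(R*(E1,E2)E2, E1)` satisfies `κ* = −div* ρ♯`, where
`div* ρ♯ = γ(∇*_{E1} ρ♯, E1) + γ(∇*_{E2} ρ♯, E2)`. -/
theorem flatness_gives_divergence_representation
    (γ : V →ₗ[F] V →ₗ[F] F) (hγsymm : ∀ X Y : V, γ X Y = γ Y X)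
    (D : V → F → F) (bracket : V → V → V)
    (nablaStar : V → V → V)
    (hC : IsConnection D nablaStar) (hM : IsMetrical γ D nablaStar)
    (hTfree : ∀ X Y : V, torsionT bracket nablaStar X Y = 0)
    (ρ : V →ₗ[F] F) (ρs : V) (hρs : ∀ X : V, γ ρs X = ρ X)
    (E1 E2 : V)
    (h11 : γ E1 E1 = 1) (h22 : γ E2 E2 = 1) (h12 : γ E1 E2 = 0)
    (hspan : ∀ v : V, ∃ a b : F, v = a • E1 + b • E2)
    (hflat : ∀ X Y Z : V,
      curvatureR bracket (fun X Y => nablaStar X Y - ρ Y • X + γ X Y • ρs) X Y Z = 0) :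
    γ (curvatureR bracket nablaStar E1 E2 E2) E1
      = -(γ (nablaStar E1 ρs) E1 + γ (nablaStar E2 ρs) E2) := by

  obtain ⟨hadd1, hsmul1, hadd2, hleib⟩ := hC
  have hsub2 : ∀ X Y Z : V, nablaStar X (Y - Z) = nablaStar X Y - nablaStar X Z := by
    intro X Y Z
    have h' : nablaStar X (Y - Z) + nablaStar X Z = nablaStar X Y := by
      rw [← hadd2, sub_add_cancel]
    linear_combination (norm := abel) h'
  have hsub1 : ∀ X Y Z : V, nablaStar (X - Y) Z = nablaStar X Z - nablaStar Y Z := by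
    intro X Y Z
    have h' : nablaStar (X - Y) Z + nablaStar Y Z = nablaStar X Z := by
      rw [← hadd1, sub_add_cancel]
    linear_combination (norm := abel) h'
  have h21 : γ E2 E1 = 0 := (hγsymm E2 E1).trans h12
  have hbr : ∀ X Y : V, bracket X Y = nablaStar X Y - nablaStar Y X := by
    intro X Y
    have := hTfree X Y
    unfold torsionT at this
    linear_combination (norm := abel) -this
  have hD1 : ∀ X : V, D X 1 = 0 := by
    intro X
    have e := hleib X 1 E1
    rw [one_smul, one_smul] at e
    have h0 : D X 1 • E1 = 0 := by
      have := e.symm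
      rwa [add_eq_right] at this
    have : γ (D X 1 • E1) E1 = 0 := by rw [h0]; simp
    simpa [h11, smul_eq_mul] using this
  have h := hflat E1 E2 E2
  simp only [curvatureR] at h
  simp only [hbr, h22, h12, one_smul, zero_smul, add_zero] at h
  simp only [hadd2, hsub2, hleib, hadd1, hsub1, hsmul1, map_add, map_sub, map_smul,
    LinearMap.add_apply, LinearMap.sub_apply, LinearMap.smul_apply, smul_eq_mul] at h
  have h1 := congrArg (fun v => (γ v) E1) h
  simp only [map_add, map_sub, map_smul, LinearMap.add_apply, LinearMap.sub_apply,
    LinearMap.smul_apply, map_zero, LinearMap.zero_apply, smul_eq_mul,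
    h11, h12, h21, h22, hρs, mul_one, mul_zero, zero_mul, sub_zero, add_zero] at h1
  have hD0 : ∀ X : V, D X 0 = 0 := by
    intro X
    have hn0 : nablaStar X 0 = 0 := by
      have := hadd2 X 0 0
      rw [add_zero] at this
      exact (left_eq_add.mp this)
    have e := hleib X 0 E1
    rw [zero_smul, zero_smul, add_zero, hn0] at e
    have := congrArg (fun v => (γ v) E1) e
    simpa [h11, smul_eq_mul] using this.symm
  have hR1 : D E2 (ρ E2) = (γ (nablaStar E2 ρs)) E2 + ρ (nablaStar E2 E2) := by
    have := hM E2 ρs E2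
    rwa [hρs, hρs] at this
  have hR2 : (γ E1) ρs = ρ E1 := (hγsymm E1 ρs).trans (hρs E1)
  have hR3 : ρ ρs = ρ E1 * ρ E1 + ρ E2 * ρ E2 := by
    obtain ⟨a, b, hab⟩ := hspan ρs
    have ha : a = ρ E1 := by
      have := hρs E1
      rw [hab] at this
      simpa [map_add, map_smul, LinearMap.add_apply, LinearMap.smul_apply,
        smul_eq_mul, h11, h21] using this
    have hb : b = ρ E2 := by
      have := hρs E2
      rw [hab] at this
      simpa [map_add, map_smul, LinearMap.add_apply, LinearMap.smul_apply,
        smul_eq_mul, h12, h22] using this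
    rw [hab, map_add, map_smul, map_smul, smul_eq_mul, smul_eq_mul, ha, hb]
  have hR4 : (0:F) = (γ (nablaStar E1 E2)) E2 + (γ E2) (nablaStar E1 E2) := by
    have := hM E1 E2 E2
    rwa [h22, hD1] at this
  have hR5 : (0:F) = (γ (nablaStar E2 E1)) E2 + (γ E1) (nablaStar E2 E2) := by
    have := hM E2 E1 E2
    rwa [h12, hD0] at this
  simp only [curvatureR, hbr, hsub1, map_sub, LinearMap.sub_apply]
  linear_combination h1 - hR1 - ρ E1 * hR2 + hR3 - ρ E1 * hR4 + ρ E1 * hR5
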